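/- arXiv:1104.3158 — 2 statements merged into one kernel-verified Lean document; each statement's English description precedes it below -/
import Mathlib

section
/- Let k ≥ 2 and let H*_2 be the extremal k-graph on 2k vertices (with unique perfect matching {M_1, M_2}, M_1 = {1,…,k}, M_2 = {k+1,…,2k}). Let E be an edge of H*_2 other than M_1 and M_2, and let Ē = {1,…,2k} \ E. Then the hypergraph obtained from H*_2 by replacing E with Ē still has the unique perfect matching {M_1, M_2} and the same number of edges f(k,2), but is not isomorphic to H*_2 (for k ≥ 3 and a suitable choice of E). -/
open Finset

def Mset (k i : ℕ) : Finset ℕ := Finset.Icc (k * (i - 1) + 1) (k * i)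

def Edges (k : ℕ) : ℕ → Finset (Finset ℕ)
  | 0 => ∅
  | m + 1 =>
      Edges k m ∪
        ((Finset.Icc 1 (k * (m + 1))).powersetCard k).filter
          (fun E => (E ∩ Mset k (m + 1)).Nonempty ∧ k * (m + 1) ∉ E) ∪
        {Mset k (m + 1)}

def b (k l : ℕ) : ℚ :=
  ((l - 1 : ℚ) / l) *
    ∑ i ∈ Finset.range l, (-1 : ℚ) ^ i * (l.choose i) * ((k * (l - i)).choose k)

def f (k m : ℕ) : ℚ := m + ∑ l ∈ Finset.Icc 2 k, b k l * (m.choose l)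

/-- The hypergraph obtained from `H*_2` by replacing the edge `E` with its
complement `Ē = {1,…,2k} \ E`. -/
def Swapped (k : ℕ) (E : Finset ℕ) : Finset (Finset ℕ) :=
  insert (Finset.Icc 1 (k * 2) \ E) ((Edges k 2).erase E)

lemma Mset_one (k : ℕ) : Mset k 1 = Finset.Icc 1 k := by simp [Mset]

lemma Mset_two (k : ℕ) : Mset k 2 = Finset.Icc (k+1) (k*2) := by
  simp [Mset]

lemma edges_one (k : ℕ) (hk : 1 ≤ k) : Edges k 1 = {Finset.Icc 1 k} := by
  show Edges k 0 ∪ _ ∪ _ = _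
  rw [show Edges k 0 = ∅ from rfl]
  have : ((Finset.Icc 1 (k * (0 + 1))).powersetCard k).filter
      (fun E => (E ∩ Mset k (0 + 1)).Nonempty ∧ k * (0 + 1) ∉ E) = ∅ := by
    rw [Finset.filter_eq_empty_iff]
    intro E hE
    rw [Finset.mem_powersetCard] at hE
    have hcard : (Finset.Icc 1 (k*(0+1))).card = k := by
      rw [Nat.card_Icc]; omega
    have hEq : E = Finset.Icc 1 (k*(0+1)) :=
      Finset.eq_of_subset_of_card_le hE.1 (by omega)
    simp only [hEq]
    intro h
    exact h.2 (by simp [Finset.mem_Icc]; omega)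
  rw [this, Mset_one]
  simp

lemma mem_edges_two (k : ℕ) (hk : 1 ≤ k) (E : Finset ℕ) :
    E ∈ Edges k 2 ↔ E = Finset.Icc 1 k ∨ E = Finset.Icc (k+1) (k*2) ∨
      (E ⊆ Finset.Icc 1 (k*2) ∧ E.card = k ∧
        (E ∩ Finset.Icc (k+1) (k*2)).Nonempty ∧ k*2 ∉ E) := by
  show E ∈ Edges k 1 ∪ _ ∪ _ ↔ _
  rw [edges_one k hk]
  have h2 : Mset k (1+1) = Finset.Icc (k+1) (k*2) := Mset_two k
  simp only [Finset.mem_union, Finset.mem_singleton, Finset.mem_filter,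
    Finset.mem_powersetCard, h2]
  constructor
  · rintro ((h | ⟨⟨h1, h2⟩, h3, h4⟩) | h)
    · exact Or.inl h
    · exact Or.inr (Or.inr ⟨h1, h2, h3, h4⟩)
    · exact Or.inr (Or.inl h)
  · rintro (h | h | ⟨h1, h2, h3, h4⟩)
    · exact Or.inl (Or.inl h)
    · exact Or.inr h
    · exact Or.inl (Or.inr ⟨⟨h1, h2⟩, h3, h4⟩)

section facts
variable (k : ℕ) (hk : 2 ≤ k)

lemma card_M1 : (Finset.Icc 1 k).card = k := by rw [Nat.card_Icc]; omega
lemma card_M2 : (Finset.Icc (k+1) (k*2)).card = k := by rw [Nat.card_Icc]; omega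
lemma card_V : (Finset.Icc 1 (k*2)).card = k*2 := by rw [Nat.card_Icc]; omega

lemma edge_card (hk : 1 ≤ k) {E : Finset ℕ} (hE : E ∈ Edges k 2) : E.card = k := by
  rw [mem_edges_two k hk] at hE
  rcases hE with h | h | h
  · rw [h, card_M1]
  · rw [h, card_M2]
  · exact h.2.1

lemma edge_sub (hk : 1 ≤ k) {E : Finset ℕ} (hE : E ∈ Edges k 2) :
    E ⊆ Finset.Icc 1 (k*2) := by
  rw [mem_edges_two k hk] at hE
  rcases hE with h | h | h
  · rw [h]; intro x hx; simp only [Finset.mem_Icc] at *; omega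
  · rw [h]; intro x hx; simp only [Finset.mem_Icc] at *; omega
  · exact h.1

lemma edge_top (hk : 2 ≤ k) {E : Finset ℕ} (hE : E ∈ Edges k 2) (h2k : k*2 ∈ E) :
    E = Finset.Icc (k+1) (k*2) := by
  rw [mem_edges_two k (by omega)] at hE
  rcases hE with h | h | h
  · rw [h] at h2k; simp only [Finset.mem_Icc] at h2k; omega
  · exact h
  · exact absurd h2k h.2.2.2

lemma M1_mem (hk : 1 ≤ k) : Finset.Icc 1 k ∈ Edges k 2 := by
  rw [mem_edges_two k hk]; left; rfl

lemma M2_mem (hk : 1 ≤ k) : Finset.Icc (k+1) (k*2) ∈ Edges k 2 := by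
  rw [mem_edges_two k hk]; right; left; rfl

lemma M1_ne_M2 (hk : 1 ≤ k) : (Finset.Icc 1 k : Finset ℕ) ≠ Finset.Icc (k+1) (k*2) := by
  intro h
  have h1 : (1:ℕ) ∈ Finset.Icc 1 k := by simp [Finset.mem_Icc]; omega
  rw [h] at h1
  simp only [Finset.mem_Icc] at h1; omega

end facts

set_option linter.unusedSectionVars false

section part1
variable {k : ℕ} (hk : 2 ≤ k) {E : Finset ℕ} (hE : E ∈ Edges k 2)
  (hE1 : E ≠ Finset.Icc 1 k) (hE2 : E ≠ Finset.Icc (k+1) (k*2))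

include hk hE hE1 hE2

lemma E_props : E ⊆ Finset.Icc 1 (k*2) ∧ E.card = k ∧
    (E ∩ Finset.Icc (k+1) (k*2)).Nonempty ∧ k*2 ∉ E := by
  rw [mem_edges_two k (by omega)] at hE
  rcases hE with h | h | h
  · exact absurd h hE1
  · exact absurd h hE2
  · exact h

lemma comp_card : (Finset.Icc 1 (k*2) \ E).card = k := by
  obtain ⟨h1, h2, _, _⟩ := E_props hk hE hE1 hE2
  rw [Finset.card_sdiff_of_subset h1, card_V, h2]; omega

lemma top_mem_comp : k*2 ∈ Finset.Icc 1 (k*2) \ E := by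
  obtain ⟨_, _, _, h4⟩ := E_props hk hE hE1 hE2
  rw [Finset.mem_sdiff, Finset.mem_Icc]
  exact ⟨⟨by omega, le_refl _⟩, h4⟩

lemma comp_not_mem : Finset.Icc 1 (k*2) \ E ∉ Edges k 2 := by
  intro hmem
  have hceq := edge_top k hk hmem (top_mem_comp hk hE hE1 hE2)
  obtain ⟨h1, h2, h3, h4⟩ := E_props hk hE hE1 hE2
  apply hE1
  have hsub : Finset.Icc 1 k ⊆ E := by
    intro x hx
    simp only [Finset.mem_Icc] at hx
    by_contra hxE
    have hx2 : x ∈ Finset.Icc 1 (k*2) \ E := by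
      rw [Finset.mem_sdiff, Finset.mem_Icc]; exact ⟨⟨hx.1, by omega⟩, hxE⟩
    rw [hceq, Finset.mem_Icc] at hx2
    omega
  exact (Finset.eq_of_subset_of_card_le hsub (by rw [card_M1, h2])).symm

lemma E_not_mem_swapped : E ∉ Swapped k E := by
  intro hmem
  rw [Swapped, Finset.mem_insert] at hmem
  obtain ⟨_, _, _, h4⟩ := E_props hk hE hE1 hE2
  rcases hmem with h | h
  · have := top_mem_comp hk hE hE1 hE2
    rw [← h] at this; exact h4 this
  · exact (Finset.notMem_erase E _) h

lemma swapped_edge_card {e : Finset ℕ} (he : e ∈ Swapped k E) : e.card = k := by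
  rw [Swapped, Finset.mem_insert] at he
  rcases he with h | h
  · rw [h]; exact comp_card hk hE hE1 hE2
  · exact edge_card k (by omega) (Finset.mem_of_mem_erase h)

lemma swapped_edge_sub {e : Finset ℕ} (he : e ∈ Swapped k E) :
    e ⊆ Finset.Icc 1 (k*2) := by
  rw [Swapped, Finset.mem_insert] at he
  rcases he with h | h
  · rw [h]; exact Finset.sdiff_subset
  · exact edge_sub k (by omega) (Finset.mem_of_mem_erase h)

lemma matching_sub :
    ({Finset.Icc 1 k, Finset.Icc (k+1) (k*2)} : Finset (Finset ℕ)) ⊆ Swapped k E := by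
  intro e he
  rw [Finset.mem_insert, Finset.mem_singleton] at he
  rw [Swapped, Finset.mem_insert]
  right
  rcases he with h | h
  · rw [h]; exact Finset.mem_erase.2 ⟨Ne.symm hE1, M1_mem k (by omega)⟩
  · rw [h]; exact Finset.mem_erase.2 ⟨Ne.symm hE2, M2_mem k (by omega)⟩

lemma uniqueness (P : Finset (Finset ℕ)) (hP : P ⊆ Swapped k E)
    (hdisj : ∀ e ∈ P, ∀ e' ∈ P, e ≠ e' → Disjoint e e')
    (hcov : P.biUnion id = Finset.Icc 1 (k*2)) :
    P = ({Finset.Icc 1 k, Finset.Icc (k+1) (k*2)} : Finset (Finset ℕ)) := by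
  have hcardsum : ∑ e ∈ P, e.card = k*2 := by
    have hcb := Finset.card_biUnion (s := P) (t := id) (fun e he e' he' hne => hdisj e he e' he' hne)
    rw [hcov, card_V] at hcb
    simpa using hcb.symm
  have hcards : ∀ e ∈ P, e.card = k := fun e he =>
    swapped_edge_card hk hE hE1 hE2 (hP he)
  have hsumconst : ∑ e ∈ P, e.card = P.card * k := by
    rw [Finset.sum_congr rfl hcards, Finset.sum_const, smul_eq_mul]
  have hPcard : P.card = 2 :=
    Nat.eq_of_mul_eq_mul_right (m := k) (by omega) (by rw [← hsumconst, hcardsum]; ring)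
  -- complement property
  have hcomp : ∀ e ∈ P, ∀ e' ∈ P, e ≠ e' → e' = Finset.Icc 1 (k*2) \ e := by
    intro e he e' he' hne
    have hsub : e' ⊆ Finset.Icc 1 (k*2) \ e := by
      intro x hx
      rw [Finset.mem_sdiff]
      refine ⟨?_, fun hxe => ?_⟩
      · rw [← hcov]; exact Finset.mem_biUnion.2 ⟨e', he', hx⟩
      · exact Finset.disjoint_left.1 (hdisj e he e' he' hne) hxe hx
    apply Finset.eq_of_subset_of_card_le hsub
    rw [Finset.card_sdiff_of_subset (swapped_edge_sub hk hE hE1 hE2 (hP he)), card_V,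
      hcards e he, hcards e' he']
    omega
  -- the vertex k*2 is covered
  have htop : k*2 ∈ P.biUnion id := by rw [hcov]; simp [Finset.mem_Icc]; omega
  obtain ⟨e, heP, hetop⟩ := Finset.mem_biUnion.1 htop
  obtain ⟨e', he'P, hne⟩ := Finset.exists_mem_ne (s := P) (by omega) e
  have he'c : e' = Finset.Icc 1 (k*2) \ e := hcomp e heP e' he'P (Ne.symm hne)
  have hec : e = Finset.Icc 1 (k*2) \ e' := hcomp e' he'P e heP hne
  -- e ∈ Swapped: case on whether e is the complement edge
  have heSw := hP heP
  rw [Swapped, Finset.mem_insert] at heSw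
  have heM2 : e = Finset.Icc (k+1) (k*2) := by
    rcases heSw with h | h
    · exfalso
      -- then e' = V \ (V \ E) = E, but E ∉ Swapped
      have : e' = E := by
        rw [he'c, h, Finset.sdiff_sdiff_self_left,
          Finset.inter_eq_right.2 (E_props hk hE hE1 hE2).1]
      exact E_not_mem_swapped hk hE hE1 hE2 (this ▸ hP he'P)
    · exact edge_top k hk (Finset.mem_of_mem_erase h) hetop
  have he'M1 : e' = Finset.Icc 1 k := by
    rw [he'c, heM2]
    ext x
    simp only [Finset.mem_sdiff, Finset.mem_Icc]
    omega
  apply Finset.eq_of_subset_of_card_le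
  · intro x hx
    rw [Finset.mem_insert, Finset.mem_singleton]
    -- need : P ⊆ {M1, M2}; P has card 2 containing e and e'
    have hsub2 : ({e', e} : Finset (Finset ℕ)) ⊆ P := by
      intro y hy
      rw [Finset.mem_insert, Finset.mem_singleton] at hy
      rcases hy with h | h
      · rw [h]; exact he'P
      · rw [h]; exact heP
    have : ({e', e} : Finset (Finset ℕ)) = P := by
      apply Finset.eq_of_subset_of_card_le hsub2
      rw [Finset.card_insert_of_notMem (by simp [hne]), Finset.card_singleton, hPcard]
    rw [← this, Finset.mem_insert, Finset.mem_singleton] at hx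
    rcases hx with h | h
    · left; rw [h, he'M1]
    · right; rw [h, heM2]
  · rw [hPcard]
    exact Finset.card_insert_le _ _ |>.trans (by simp)

end part1

section cardpart
variable {k : ℕ} (hk : 2 ≤ k)
include hk

lemma fil_eq :
    ((Finset.Icc 1 (k * 2)).powersetCard k).filter
      (fun E => (E ∩ Mset k 2).Nonempty ∧ k * 2 ∉ E) =
    ((Finset.Icc 1 (k*2 - 1)).powersetCard k).erase (Finset.Icc 1 k) := by
  ext E
  rw [Finset.mem_filter, Finset.mem_powersetCard, Finset.mem_erase,
    Finset.mem_powersetCard, Mset_two]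
  constructor
  · rintro ⟨⟨hsub, hcard⟩, hne, hnot⟩
    refine ⟨?_, ?_, hcard⟩
    · intro hEq
      obtain ⟨x, hx⟩ := hne
      rw [hEq, Finset.mem_inter, Finset.mem_Icc, Finset.mem_Icc] at hx
      omega
    · intro x hx
      have h1 := hsub hx
      rw [Finset.mem_Icc] at h1 ⊢
      have : x ≠ k*2 := fun h => hnot (h ▸ hx)
      omega
  · rintro ⟨hneq, hsub, hcard⟩
    refine ⟨⟨fun x hx => ?_, hcard⟩, ?_, fun h => ?_⟩
    · have := hsub hx; rw [Finset.mem_Icc] at this ⊢; omega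
    · by_contra hemp
      rw [Finset.not_nonempty_iff_eq_empty] at hemp
      apply hneq
      apply Finset.eq_of_subset_of_card_le _ (by rw [card_M1, hcard])
      intro x hx
      have h1 := hsub hx
      rw [Finset.mem_Icc] at h1 ⊢
      have : x ∉ Finset.Icc (k+1) (k*2) := fun hm => by
        have : x ∈ E ∩ Finset.Icc (k+1) (k*2) := Finset.mem_inter.2 ⟨hx, hm⟩
        rw [hemp] at this; exact absurd this (Finset.notMem_empty x)
      rw [Finset.mem_Icc] at this
      omega
    · have := hsub h; rw [Finset.mem_Icc] at this; omega

lemma edges_two_card : (Edges k 2).card = 1 + ((k*2 - 1).choose k) := by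
  have hM1mem : Finset.Icc 1 k ∈ (Finset.Icc 1 (k*2 - 1)).powersetCard k := by
    rw [Finset.mem_powersetCard]
    exact ⟨fun x hx => by rw [Finset.mem_Icc] at *; omega, card_M1 k⟩
  have hpcard : ((Finset.Icc 1 (k*2 - 1)).powersetCard k).card = (k*2-1).choose k := by
    simp [Finset.card_powersetCard, Nat.card_Icc]
  have hchoosepos : 1 ≤ (k*2-1).choose k := Nat.choose_pos (by omega)
  show (Edges k 1 ∪ _ ∪ {Mset k 2}).card = _
  rw [edges_one k (by omega)]
  have hfe : (((Finset.Icc 1 (k * (1+1))).powersetCard k).filter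
      (fun E => (E ∩ Mset k (1+1)).Nonempty ∧ k * (1+1) ∉ E)) =
      ((Finset.Icc 1 (k*2 - 1)).powersetCard k).erase (Finset.Icc 1 k) := fil_eq hk
  rw [hfe, Mset_two]
  have hd1 : Disjoint ({Finset.Icc 1 k} : Finset (Finset ℕ))
      (((Finset.Icc 1 (k*2 - 1)).powersetCard k).erase (Finset.Icc 1 k)) := by
    rw [Finset.disjoint_singleton_left]
    exact Finset.notMem_erase _ _
  have hd2 : Disjoint ({Finset.Icc 1 k} ∪
      ((Finset.Icc 1 (k*2 - 1)).powersetCard k).erase (Finset.Icc 1 k))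
      ({Finset.Icc (k+1) (k*2)} : Finset (Finset ℕ)) := by
    rw [Finset.disjoint_singleton_right, Finset.mem_union, Finset.mem_singleton]
    rintro (h | h)
    · exact M1_ne_M2 k (by omega) h.symm
    · have := Finset.mem_of_mem_erase h
      rw [Finset.mem_powersetCard] at this
      have h2 := this.1 (show k*2 ∈ Finset.Icc (k+1) (k*2) by rw [Finset.mem_Icc]; omega)
      rw [Finset.mem_Icc] at h2
      omega
  rw [Finset.card_union_of_disjoint hd2, Finset.card_union_of_disjoint hd1,
    Finset.card_singleton, Finset.card_singleton,
    Finset.card_erase_of_mem hM1mem, hpcard]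
  omega

lemma choose_double : (k*2).choose k = 2 * ((k*2 - 1).choose k) := by
  obtain ⟨j, rfl⟩ : ∃ j, k = j + 2 := ⟨k - 2, by omega⟩
  have h3 : (2*j+3).choose (j+1) = (2*j+3).choose (j+2) := by
    rw [← Nat.choose_symm (by omega)]
    congr 1
    omega
  have h5 : ((j+2)*2).choose (j+2) = (2*j+3).choose (j+1) + (2*j+3).choose (j+2) := by
    rw [show (j+2)*2 = (2*j+3)+1 by ring, show j+2 = (j+1)+1 from rfl,
      Nat.choose_succ_succ]
  rw [h5, h3, show (j+2)*2-1 = 2*j+3 by omega]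
  ring

lemma f_two : f k 2 = 1 + ((k*2 - 1).choose k : ℚ) := by
  rw [f]
  have hsplit : Finset.Icc 2 k = insert 2 (Finset.Icc 3 k) := by
    ext x; simp only [Finset.mem_insert, Finset.mem_Icc]; omega
  rw [hsplit, Finset.sum_insert (by simp [Finset.mem_Icc])]
  have hzero : ∑ l ∈ Finset.Icc 3 k, b k l * ((2:ℕ).choose l : ℚ) = 0 := by
    apply Finset.sum_eq_zero
    intro l hl
    rw [Finset.mem_Icc] at hl
    rw [Nat.choose_eq_zero_of_lt (by omega)]
    simp
  rw [hzero, add_zero]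
  have hb2 : b k 2 = (((k*2).choose k : ℚ) - 2) / 2 := by
    rw [b, Finset.sum_range_succ, Finset.sum_range_one]
    norm_num
    ring
  rw [hb2, Nat.choose_self]
  have hcd : ((k*2).choose k : ℚ) = 2 * ((k*2 - 1).choose k : ℚ) := by
    rw_mod_cast [choose_double hk]
  rw [hcd]
  push_cast
  ring

lemma swapped_card {E : Finset ℕ} (hE : E ∈ Edges k 2)
    (hE1 : E ≠ Finset.Icc 1 k) (hE2 : E ≠ Finset.Icc (k+1) (k*2)) :
    ((Swapped k E).card : ℚ) = f k 2 := by
  rw [Swapped, Finset.card_insert_of_notMem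
    (fun h => comp_not_mem hk hE hE1 hE2 (Finset.mem_of_mem_erase h)),
    Finset.card_erase_of_mem hE, edges_two_card hk, f_two hk]
  have : 1 ≤ (k*2-1).choose k := Nat.choose_pos (by omega)
  push_cast [Nat.cast_sub (by omega : 1 ≤ 1 + (k*2-1).choose k)]
  ring

end cardpart

section noniso
variable {k : ℕ} (hk : 3 ≤ k)
include hk

lemma E0_mem : Finset.Icc 2 (k+1) ∈ Edges k 2 := by
  rw [mem_edges_two k (by omega)]
  right; right
  refine ⟨fun x hx => ?_, ?_, ⟨k+1, ?_⟩, ?_⟩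
  · rw [Finset.mem_Icc] at *; omega
  · rw [Nat.card_Icc]; omega
  · rw [Finset.mem_inter, Finset.mem_Icc, Finset.mem_Icc]; omega
  · rw [Finset.mem_Icc]; omega

lemma E0_ne1 : (Finset.Icc 2 (k+1) : Finset ℕ) ≠ Finset.Icc 1 k := by
  intro h
  have : (k+1 : ℕ) ∈ Finset.Icc 2 (k+1) := by rw [Finset.mem_Icc]; omega
  rw [h, Finset.mem_Icc] at this; omega

lemma E0_ne2 : (Finset.Icc 2 (k+1) : Finset ℕ) ≠ Finset.Icc (k+1) (k*2) := by
  intro h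
  have : (2 : ℕ) ∈ Finset.Icc 2 (k+1) := by rw [Finset.mem_Icc]; omega
  rw [h, Finset.mem_Icc] at this; omega

lemma deg_one : (Edges k 2).filter (fun e => k*2 ∈ e) = {Finset.Icc (k+1) (k*2)} := by
  ext e
  rw [Finset.mem_filter, Finset.mem_singleton]
  constructor
  · rintro ⟨he, htop⟩
    exact edge_top k (by omega) he htop
  · rintro rfl
    exact ⟨M2_mem k (by omega), by rw [Finset.mem_Icc]; omega⟩

lemma deg_two (v : ℕ) (hv : v ∈ Finset.Icc 1 (k*2)) :
    1 < ((Swapped k (Finset.Icc 2 (k+1))).filter (fun e => v ∈ e)).card := by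
  rw [Finset.one_lt_card]
  rw [Finset.mem_Icc] at hv
  have hmemSw : ∀ e : Finset ℕ, e ∈ Edges k 2 → e ≠ Finset.Icc 2 (k+1) →
      e ∈ Swapped k (Finset.Icc 2 (k+1)) := by
    intro e he hne
    rw [Swapped, Finset.mem_insert]
    exact Or.inr (Finset.mem_erase.2 ⟨hne, he⟩)
  rcases le_or_gt v k with hvk | hvk
  · -- v ∈ M1 : use M1 and insert v (Icc (k+1) (k*2-1))
    refine ⟨Finset.Icc 1 k, ?_, insert v (Finset.Icc (k+1) (k*2-1)), ?_, ?_⟩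
    · rw [Finset.mem_filter]
      refine ⟨hmemSw _ (M1_mem k (by omega)) (Ne.symm (E0_ne1 hk)), ?_⟩
      rw [Finset.mem_Icc]; omega
    · rw [Finset.mem_filter]
      refine ⟨hmemSw _ ?_ ?_, Finset.mem_insert_self _ _⟩
      · rw [mem_edges_two k (by omega)]
        right; right
        refine ⟨?_, ?_, ⟨k+1, ?_⟩, ?_⟩
        · intro x hx
          rw [Finset.mem_insert, Finset.mem_Icc] at hx
          rw [Finset.mem_Icc]
          rcases hx with h | h <;> omega
        · rw [Finset.card_insert_of_notMem (by rw [Finset.mem_Icc]; omega),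
            Nat.card_Icc]
          omega
        · rw [Finset.mem_inter, Finset.mem_insert, Finset.mem_Icc, Finset.mem_Icc]
          constructor
          · right; omega
          · omega
        · rw [Finset.mem_insert, Finset.mem_Icc]
          push_neg
          omega
      · intro h
        have h1 : k*2-1 ∈ insert v (Finset.Icc (k+1) (k*2-1)) := by
          rw [Finset.mem_insert, Finset.mem_Icc]; right; omega
        rw [h, Finset.mem_Icc] at h1
        omega
    · intro h
      have : (k+1 : ℕ) ∈ Finset.Icc 1 k := by
        rw [h, Finset.mem_insert, Finset.mem_Icc]; right; omega
      rw [Finset.mem_Icc] at this; omega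
  rcases lt_or_ge v (k*2) with hvtop | hvtop
  · -- k+1 ≤ v ≤ k*2-1 : use M2 and insert 1 (Icc (k+1) (k*2-1))
    refine ⟨Finset.Icc (k+1) (k*2), ?_, insert 1 (Finset.Icc (k+1) (k*2-1)), ?_, ?_⟩
    · rw [Finset.mem_filter]
      refine ⟨hmemSw _ (M2_mem k (by omega)) (Ne.symm (E0_ne2 hk)), ?_⟩
      rw [Finset.mem_Icc]; omega
    · rw [Finset.mem_filter]
      constructor
      · refine hmemSw _ ?_ ?_
        · rw [mem_edges_two k (by omega)]
          right; right
          refine ⟨?_, ?_, ⟨k+1, ?_⟩, ?_⟩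
          · intro x hx
            rw [Finset.mem_insert, Finset.mem_Icc] at hx
            rw [Finset.mem_Icc]
            rcases hx with h | h <;> omega
          · rw [Finset.card_insert_of_notMem (by rw [Finset.mem_Icc]; omega),
              Nat.card_Icc]
            omega
          · rw [Finset.mem_inter, Finset.mem_insert, Finset.mem_Icc, Finset.mem_Icc]
            constructor
            · right; omega
            · omega
          · rw [Finset.mem_insert, Finset.mem_Icc]
            push_neg
            omega
        · intro h
          have h1 : (1:ℕ) ∈ insert 1 (Finset.Icc (k+1) (k*2-1)) := Finset.mem_insert_self _ _
          rw [h, Finset.mem_Icc] at h1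
          omega
      · rw [Finset.mem_insert, Finset.mem_Icc]; right; omega
    · intro h
      have : (1:ℕ) ∈ Finset.Icc (k+1) (k*2) := by
        rw [h]; exact Finset.mem_insert_self _ _
      rw [Finset.mem_Icc] at this; omega
  · -- v = k*2 : use M2 and the complement edge
    have hveq : v = k*2 := by omega
    refine ⟨Finset.Icc (k+1) (k*2), ?_,
      Finset.Icc 1 (k*2) \ Finset.Icc 2 (k+1), ?_, ?_⟩
    · rw [Finset.mem_filter]
      refine ⟨hmemSw _ (M2_mem k (by omega)) (Ne.symm (E0_ne2 hk)), ?_⟩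
      rw [Finset.mem_Icc]; omega
    · rw [Finset.mem_filter]
      refine ⟨Finset.mem_insert_self _ _, ?_⟩
      rw [Finset.mem_sdiff, Finset.mem_Icc, Finset.mem_Icc]
      omega
    · intro h
      have : (1:ℕ) ∈ Finset.Icc (k+1) (k*2) := by
        rw [h, Finset.mem_sdiff, Finset.mem_Icc, Finset.mem_Icc]
        omega
      rw [Finset.mem_Icc] at this; omega

lemma noniso : ¬ ∃ σ : Equiv.Perm ℕ,
    (Swapped k (Finset.Icc 2 (k+1))).image (fun e => e.image σ) = Edges k 2 := by
  rintro ⟨σ, hσ⟩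
  set v := σ.symm (k*2) with hv
  have hmem : ∀ e : Finset ℕ, (k*2 ∈ e.image σ) ↔ v ∈ e := by
    intro e
    rw [Finset.mem_image]
    constructor
    · rintro ⟨a, ha, hae⟩
      have : σ.symm (k*2) = a := by rw [← hae, Equiv.symm_apply_apply]
      rw [hv, this]; exact ha
    · intro hva
      exact ⟨v, hva, σ.apply_symm_apply _⟩
  have himg : ((Swapped k (Finset.Icc 2 (k+1))).filter (fun e => v ∈ e)).image
      (fun e => e.image σ) = (Edges k 2).filter (fun e => k*2 ∈ e) := by
    rw [← hσ, Finset.filter_image]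
    congr 1
    apply Finset.filter_congr
    intro e _
    exact (hmem e).symm
  have hcard1 : ((Swapped k (Finset.Icc 2 (k+1))).filter (fun e => v ∈ e)).card = 1 := by
    have := congrArg Finset.card himg
    rwa [Finset.card_image_of_injective _ (Finset.image_injective σ.injective),
      deg_one hk, Finset.card_singleton] at this
  obtain ⟨e, he⟩ := Finset.card_eq_one.1 hcard1
  have heMem : e ∈ (Swapped k (Finset.Icc 2 (k+1))).filter (fun e => v ∈ e) := by
    rw [he]; exact Finset.mem_singleton_self e
  rw [Finset.mem_filter] at heMem
  have hvV : v ∈ Finset.Icc 1 (k*2) :=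
    swapped_edge_sub (by omega : 2 ≤ k) (E0_mem hk) (E0_ne1 hk) (E0_ne2 hk)
      heMem.1 heMem.2
  have := deg_two hk v hvV
  omega

end noniso

theorem stmt_15 (k : ℕ) (hk : 2 ≤ k) :
    (∀ E ∈ Edges k 2, E ≠ Mset k 1 → E ≠ Mset k 2 →
      -- `{M_1, M_2}` is still the unique perfect matching:
      (({Mset k 1, Mset k 2} : Finset (Finset ℕ)) ⊆ Swapped k E ∧
        (∀ e ∈ ({Mset k 1, Mset k 2} : Finset (Finset ℕ)),
          ∀ e' ∈ ({Mset k 1, Mset k 2} : Finset (Finset ℕ)), e ≠ e' → Disjoint e e') ∧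
        ({Mset k 1, Mset k 2} : Finset (Finset ℕ)).biUnion id = Finset.Icc 1 (k * 2)) ∧
      (∀ P : Finset (Finset ℕ),
        P ⊆ Swapped k E → (∀ e ∈ P, ∀ e' ∈ P, e ≠ e' → Disjoint e e') →
          P.biUnion id = Finset.Icc 1 (k * 2) →
            P = ({Mset k 1, Mset k 2} : Finset (Finset ℕ))) ∧
      -- same number of edges:
      ((Swapped k E).card : ℚ) = f k 2) ∧
    -- for `k ≥ 3` a suitable choice of `E` gives a non-isomorphic example:
    (3 ≤ k → ∃ E ∈ Edges k 2, E ≠ Mset k 1 ∧ E ≠ Mset k 2 ∧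
      ¬ ∃ σ : Equiv.Perm ℕ,
        (Swapped k E).image (fun e => e.image σ) = Edges k 2) := by
  have hM1 : Mset k 1 = Finset.Icc 1 k := Mset_one k
  have hM2 : Mset k 2 = Finset.Icc (k+1) (k*2) := Mset_two k
  rw [hM1, hM2]
  constructor
  · intro E hE hE1 hE2
    refine ⟨⟨matching_sub hk hE hE1 hE2, ?_, ?_⟩,
      uniqueness hk hE hE1 hE2, swapped_card hk hE hE1 hE2⟩
    · have hdisj : Disjoint (Finset.Icc 1 k) (Finset.Icc (k+1) (k*2)) := by
        rw [Finset.disjoint_left]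
        intro a ha hb
        rw [Finset.mem_Icc] at ha hb
        omega
      intro e he e' he' hne
      rw [Finset.mem_insert, Finset.mem_singleton] at he he'
      rcases he with rfl | rfl <;> rcases he' with rfl | rfl
      · exact absurd rfl hne
      · exact hdisj
      · exact hdisj.symm
      · exact absurd rfl hne
    · ext x
      simp only [Finset.mem_biUnion, Finset.mem_insert, Finset.mem_singleton, id_eq]
      constructor
      · rintro ⟨e, he, hx⟩
        rcases he with rfl | rfl <;>
          (rw [Finset.mem_Icc] at hx ⊢; omega)
      · intro hx
        rw [Finset.mem_Icc] at hx
        rcases le_or_gt x k with h | h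
        · exact ⟨Finset.Icc 1 k, Or.inl rfl, by rw [Finset.mem_Icc]; omega⟩
        · exact ⟨Finset.Icc (k+1) (k*2), Or.inr rfl, by rw [Finset.mem_Icc]; omega⟩
  · intro h3
    exact ⟨Finset.Icc 2 (k+1), E0_mem h3, E0_ne1 h3, E0_ne2 h3, noniso h3⟩
end

section
/- For every k ≥ 2 and 2 ≤ ℓ ≤ k, the quantity b_{k,ℓ} = ((ℓ-1)/ℓ) Σ_{i=0}^{ℓ-1} (-1)^i C(ℓ,i) C(k(ℓ-i),k) is a nonnegative integer; equivalently, ℓ divides (ℓ-1)·Σ_{i=0}^{ℓ-1} (-1)^i C(ℓ,i) C(k(ℓ-i),k). -/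
open Finset
lemma term_eq (k l i : ℕ) (hk : 1 ≤ k) (hi : i < l) :
    l.choose i * ((k * (l - i)).choose k) =
      l * ((l - 1).choose i * ((k * (l - i) - 1).choose (k - 1))) := by
  set j := l - i with hj
  have hj1 : 1 ≤ j := by omega
  have hkj : 1 ≤ k * j := Nat.one_le_iff_ne_zero.2 (by positivity)
  have hA : k * j * (k * j - 1).choose (k - 1) = (k * j).choose k * k := by
    have := Nat.add_one_mul_choose_eq (k * j - 1) (k - 1)
    have h1 : k * j - 1 + 1 = k * j := by omega
    have h2 : k - 1 + 1 = k := by omega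
    simp only [Nat.succ_eq_add_one, h1, h2] at this
    exact this
  have hB : l * (l - 1).choose i = l.choose i * (l - i) := by
    have := Nat.add_one_mul_choose_eq (l - 1) i
    have h1 : l - 1 + 1 = l := by omega
    simp only [Nat.succ_eq_add_one, h1] at this
    rw [this, Nat.choose_succ_right_eq]
  have hkpos : 0 < k := hk
  apply Nat.eq_of_mul_eq_mul_right hkpos
  calc l.choose i * (k * j).choose k * k
      = l.choose i * ((k * j).choose k * k) := by ring
    _ = l.choose i * (k * j * (k * j - 1).choose (k - 1)) := by rw [hA]
    _ = (l.choose i * (l - i)) * ((k * j - 1).choose (k - 1)) * k := by rw [← hj]; ring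
    _ = (l * (l - 1).choose i) * ((k * j - 1).choose (k - 1)) * k := by rw [hB]
    _ = l * ((l - 1).choose i * ((k * j - 1).choose (k - 1))) * k := by ring


lemma S_nonneg (k l : ℕ) (hk : 1 ≤ k) :
    0 ≤ ∑ i ∈ Finset.range l, (-1 : ℤ) ^ i * (l.choose i) * ((k * (l - i)).choose k) := by
  classical
  set block : Fin l → Finset (Fin l × Fin k) := fun i => {i} ×ˢ Finset.univ with hblock
  set Sf : Fin l → Finset (Finset (Fin l × Fin k)) := fun i => (block i)ᶜ.powerset with hSf
  have key := Finset.inclusion_exclusion_sum_inf_compl (Finset.univ : Finset (Fin l)) Sf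
      (fun A => if A.card = k then (1 : ℤ) else 0)
  -- LHS nonneg
  have hL : 0 ≤ ∑ A ∈ (Finset.univ : Finset (Fin l)).inf fun i => (Sf i)ᶜ,
      (if A.card = k then (1 : ℤ) else 0) := by
    apply Finset.sum_nonneg; intro A _; split <;> norm_num
  -- inf of Sf over t is powerset of complement of sup of blocks
  have hinf : ∀ t : Finset (Fin l), t.inf Sf = ((t.sup block)ᶜ).powerset := by
    intro t
    ext A
    simp only [hSf, Finset.mem_inf, Finset.mem_powerset, Finset.compl_sup,
      Finset.le_inf_iff, Finset.le_iff_subset]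
  -- card of sup of blocks
  have hsup : ∀ t : Finset (Fin l), (t.sup block).card = k * t.card := by
    intro t
    rw [Finset.sup_eq_biUnion, Finset.card_biUnion]
    · simp only [hblock, Finset.card_product, Finset.card_singleton, Finset.card_univ,
        Fintype.card_fin, one_mul, Finset.sum_const, smul_eq_mul]
      ring
    · intro i _ j _ hij
      simp only [hblock, Function.onFun]
      rw [Finset.disjoint_left]
      rintro ⟨a, b⟩ ha hb
      simp only [Finset.mem_product, Finset.mem_singleton] at ha hb
      exact hij (ha.1 ▸ hb.1 ▸ rfl)
  have hcompl : ∀ t : Finset (Fin l), ((t.sup block)ᶜ).card = k * (l - t.card) := by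
    intro t
    rw [Finset.card_compl, hsup]
    have htl : t.card ≤ l := by
      simpa using Finset.card_le_card (Finset.subset_univ t)
    simp only [Fintype.card_prod, Fintype.card_fin]
    rw [Nat.mul_sub k l t.card]
    ring_nf
  -- inner sums
  have hinner : ∀ t : Finset (Fin l),
      (∑ A ∈ t.inf Sf, if A.card = k then (1 : ℤ) else 0) =
        ((k * (l - t.card)).choose k : ℤ) := by
    intro t
    rw [hinf t, Finset.sum_boole, ← Finset.powersetCard_eq_filter,
      Finset.card_powersetCard, hcompl t]
  simp only [hinner, smul_eq_mul] at key
  rw [Finset.sum_powerset_apply_card (fun m => (-1 : ℤ) ^ m * ((k * (l - m)).choose k : ℤ))] at key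
  simp only [Finset.card_univ, Fintype.card_fin, nsmul_eq_mul] at key
  rw [Finset.sum_range_succ] at key
  have hlast : ((k * (l - l)).choose k : ℤ) = 0 := by
    simp [Nat.choose_eq_zero_of_lt hk]
  rw [hlast] at key
  simp only [mul_zero, add_zero] at key
  calc (0:ℤ) ≤ _ := hL
    _ = _ := key
    _ = ∑ i ∈ Finset.range l, (-1 : ℤ) ^ i * (l.choose i) * ((k * (l - i)).choose k) := by
      apply Finset.sum_congr rfl
      intro i _
      ring


theorem stmt_17 (k l : ℕ) (hk : 2 ≤ k) (hl : 2 ≤ l) (hlk : l ≤ k) :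
    (∃ n : ℕ, b k l = (n : ℚ)) ∧
      (l : ℤ) ∣ ((l : ℤ) - 1) *
        ∑ i ∈ Finset.range l, (-1 : ℤ) ^ i * (l.choose i) * ((k * (l - i)).choose k) := by
  have hk1 : 1 ≤ k := by omega
  set M : ℤ := ∑ i ∈ Finset.range l,
      (-1 : ℤ) ^ i * ((l - 1).choose i) * ((k * (l - i) - 1).choose (k - 1)) with hM
  have hSM : (∑ i ∈ Finset.range l,
      (-1 : ℤ) ^ i * (l.choose i) * ((k * (l - i)).choose k)) = (l : ℤ) * M := by
    rw [hM, Finset.mul_sum]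
    apply Finset.sum_congr rfl
    intro i hi
    rw [Finset.mem_range] at hi
    have h := term_eq k l i hk1 hi
    have hcast : ((l.choose i : ℤ)) * (((k * (l - i)).choose k : ℤ)) =
        (l : ℤ) * ((((l - 1).choose i : ℤ)) * (((k * (l - i) - 1).choose (k - 1) : ℤ))) := by
      exact_mod_cast congrArg (fun n : ℕ => (n : ℤ)) h
    calc (-1 : ℤ) ^ i * (l.choose i) * ((k * (l - i)).choose k)
        = (-1 : ℤ) ^ i * ((l.choose i : ℤ) * (((k * (l - i)).choose k : ℤ))) := by ring
      _ = (-1 : ℤ) ^ i * ((l : ℤ) *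
            ((((l - 1).choose i : ℤ)) * (((k * (l - i) - 1).choose (k - 1) : ℤ)))) := by
          rw [hcast]
      _ = (l : ℤ) * ((-1 : ℤ) ^ i * ((l - 1).choose i) * ((k * (l - i) - 1).choose (k - 1))) := by
          ring
  have hS0 : 0 ≤ (l : ℤ) * M := hSM ▸ S_nonneg k l hk1
  have hl0 : (0 : ℤ) < (l : ℤ) := by exact_mod_cast (by omega : 0 < l)
  have hM0 : 0 ≤ M := by
    have h0 : (l : ℤ) * 0 ≤ (l : ℤ) * M := by simpa using hS0
    exact le_of_mul_le_mul_left h0 hl0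
  constructor
  · refine ⟨(((l : ℤ) - 1) * M).toNat, ?_⟩
    have hnn : 0 ≤ ((l : ℤ) - 1) * M := by
      apply mul_nonneg _ hM0
      omega
    have htn : ((((l : ℤ) - 1) * M).toNat : ℤ) = ((l : ℤ) - 1) * M := Int.toNat_of_nonneg hnn
    have hQcast : (((((l : ℤ) - 1) * M).toNat : ℚ)) = ((l : ℚ) - 1) * (M : ℚ) := by
      have := congrArg (fun z : ℤ => (z : ℚ)) htn
      push_cast at this
      exact this
    rw [hQcast]
    have hQsum : (∑ i ∈ Finset.range l, (-1 : ℚ) ^ i * (l.choose i) * ((k * (l - i)).choose k))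
        = (l : ℚ) * (M : ℚ) := by
      have := congrArg (fun z : ℤ => (z : ℚ)) hSM
      push_cast at this ⊢
      convert this using 2
    have hlQ : (l : ℚ) ≠ 0 := by exact_mod_cast (by omega : l ≠ 0)
    rw [b, hQsum]
    field_simp
  · exact ⟨((l : ℤ) - 1) * M, by rw [hSM]; ring⟩
end
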